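/- Let E be a directed graph, let v be a vertex lying on an extreme cycle c, and let C be the cluster of v. Then the element ccc… of E^{≤∞} contains v; any p ∈ E^{≤∞} with v ∈ p⁰ satisfies p ∼ ccc…; C = T(c⁰) = T(C); and the saturated closure of C equals the saturated closure of {u} for any u ∈ T(c⁰). -/

import Mathlib

/-- A directed graph: vertices, edges, source and range maps. -/
structure DGraph where
  V : Type
  Ed : Type
  s : Ed → V
  r : Ed → V

namespace DGraph

variable (E : DGraph)

/-- One-step adjacency: there is an edge from `u` to `v`. -/
def Adj (u v : E.V) : Prop := ∃ e, E.s e = u ∧ E.r e = v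

/-- `u ≥ v`: there is a (finite) path from `u` to `v`. -/
def Reaches (u v : E.V) : Prop := Relation.ReflTransGen E.Adj u v

/-- The tree `T(W)` of a set of vertices. -/
def tree (W : Set E.V) : Set E.V := {u | ∃ v ∈ W, E.Reaches v u}

/-- The root `R(W)` of a set of vertices. -/
def root (W : Set E.V) : Set E.V := {u | ∃ v ∈ W, E.Reaches u v}

/-- The set of edges emitted by `v`. -/
def emits (v : E.V) : Set E.Ed := {e | E.s e = v}

/-- A sink emits no edges. -/
def IsSink (v : E.V) : Prop := E.emits v = ∅

/-- An infinite emitter emits infinitely many edges. -/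
def IsInfEmitter (v : E.V) : Prop := (E.emits v).Infinite

/-- A regular vertex is neither a sink nor an infinite emitter. -/
def IsRegular (v : E.V) : Prop := (E.emits v).Nonempty ∧ (E.emits v).Finite

/-- A hereditary set of vertices: `T(H) ⊆ H`. -/
def Hereditary (H : Set E.V) : Prop := ∀ u ∈ H, ∀ v, E.Reaches u v → v ∈ H

/-- A saturated set of vertices. -/
def Saturated (H : Set E.V) : Prop :=
  ∀ v, E.IsRegular v → (∀ e ∈ E.emits v, E.r e ∈ H) → v ∈ H

/-- The saturated closure of `W`: the smallest hereditary and saturated set containing `W`. -/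
def satClosure (W : Set E.V) : Set E.V :=
  ⋂₀ {H : Set E.V | E.Hereditary H ∧ E.Saturated H ∧ W ⊆ H}

/-- `es` is a finite walk (path) starting at `u`; `es = []` is the trivial path at `u`. -/
def IsWalkFrom (u : E.V) (es : List E.Ed) : Prop :=
  es.Chain' (fun e f => E.r e = E.s f) ∧ ∀ e ∈ es.head?, E.s e = u

/-- The terminal vertex (range) of the walk `es` starting at `u`. -/
def endVert (u : E.V) (es : List E.Ed) : E.V := es.getLast?.elim u E.r

/-- The set of vertices on the walk `es` starting at `u`. -/
def walkVerts (u : E.V) (es : List E.Ed) : Set E.V :=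
  insert u {v | ∃ e ∈ es, E.r e = v}

/-- An infinite path. -/
def IsInfPath (f : ℕ → E.Ed) : Prop := ∀ n, E.r (f n) = E.s (f (n + 1))

/-- The set of vertices on an infinite path. -/
def infVerts (f : ℕ → E.Ed) : Set E.V := Set.range fun n => E.s (f n)

/-- Elements of `E^{≤∞}`: finite walks or infinite paths. -/
inductive GPath (E : DGraph) : Type where
  | fin : E.V → List E.Ed → GPath E
  | inf : (ℕ → E.Ed) → GPath E

/-- Membership in `E^{≤∞}`: a well-formed finite path ending in a sink or an infinite
emitter, or an infinite path. -/
def gmem : GPath E → Prop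
  | .fin u es => E.IsWalkFrom u es ∧
      (E.IsSink (E.endVert u es) ∨ E.IsInfEmitter (E.endVert u es))
  | .inf f => E.IsInfPath f

/-- `p⁰`, the vertex set of an element of `E^{≤∞}`. -/
def gverts : GPath E → Set E.V
  | .fin u es => E.walkVerts u es
  | .inf f => E.infVerts f

/-- The graph `E` is cofinal. -/
def Cofinal : Prop :=
  ∀ v : E.V, ∀ p : GPath E, E.gmem p → ∃ w ∈ E.gverts p, E.Reaches v w

/-- `es` is a cycle based at `u`. -/
def IsCycle (u : E.V) (es : List E.Ed) : Prop :=
  es ≠ [] ∧ E.IsWalkFrom u es ∧ E.endVert u es = u ∧ (es.map E.s).Nodup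

/-- The cycle `es` (based at `u`) has an exit. -/
def HasExit (u : E.V) (es : List E.Ed) : Prop :=
  ∃ v ∈ E.walkVerts u es, ∃ e, E.s e = v ∧ e ∉ es

/-- An extreme cycle: a cycle with an exit such that `T(c⁰) ⊆ R(c⁰)`. -/
def IsExtremeCycle (u : E.V) (es : List E.Ed) : Prop :=
  E.IsCycle u es ∧ E.HasExit u es ∧
    E.tree (E.walkVerts u es) ⊆ E.root (E.walkVerts u es)

/-- `v` lies on some cycle. -/
def OnCycle (v : E.V) : Prop := ∃ u es, E.IsCycle u es ∧ v ∈ E.walkVerts u es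

/-- A terminal (infinite) path. -/
def IsTerminalPath (f : ℕ → E.Ed) : Prop :=
  E.IsInfPath f ∧
  (∀ v ∈ E.tree (E.infVerts f), ¬ E.IsInfEmitter v ∧ ¬ E.OnCycle v) ∧
  (∀ g : ℕ → E.Ed, E.IsInfPath g → E.s (g 0) ∈ E.infVerts f →
      E.tree (E.infVerts g) ⊆ E.root (E.infVerts g))

/-- A terminal vertex: a sink, a vertex on a cycle without exits, a vertex on an
extreme cycle, or a vertex on a terminal path. -/
def IsTerminalVert (v : E.V) : Prop :=
  E.IsSink v ∨
  (∃ u es, E.IsCycle u es ∧ ¬ E.HasExit u es ∧ v ∈ E.walkVerts u es) ∨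
  (∃ u es, E.IsExtremeCycle u es ∧ v ∈ E.walkVerts u es) ∨
  (∃ f, E.IsTerminalPath f ∧ v ∈ E.infVerts f)

/-- `p ∼ q` for elements of `E^{≤∞}`: `R(p⁰) = R(q⁰)`. -/
def pequiv (p q : GPath E) : Prop := E.root (E.gverts p) = E.root (E.gverts q)

/-- `v ≈ w` for terminal vertices. -/
def approx (v w : E.V) : Prop :=
  E.IsTerminalVert v ∧ E.IsTerminalVert w ∧
  ∃ p q : GPath E, E.gmem p ∧ E.gmem q ∧ v ∈ E.gverts p ∧ w ∈ E.gverts q ∧ E.pequiv p q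

/-- The cluster of a terminal vertex `v`: its `≈`-equivalence class. -/
def cluster (v : E.V) : Set E.V := {w | E.approx v w}

/-- `C` is a cluster of `E`. -/
def IsCluster (C : Set E.V) : Prop := ∃ v, E.IsTerminalVert v ∧ C = E.cluster v

/-- `Ter(E)`: the saturated closure of the set of terminal vertices. -/
def Ter : Set E.V := E.satClosure {v | E.IsTerminalVert v}

/-- The set `B_H` of breaking vertices of a (hereditary and saturated) set `H`. -/
def breaking (H : Set E.V) : Set E.V :=
  {v | v ∉ H ∧ E.IsInfEmitter v ∧
    {e | E.s e = v ∧ E.r e ∉ H}.Nonempty ∧ {e | E.s e = v ∧ E.r e ∉ H}.Finite}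

/-- `(H, S)` is an admissible pair. -/
def Admissible (H S : Set E.V) : Prop :=
  E.Hereditary H ∧ E.Saturated H ∧ S ⊆ E.breaking H

end DGraph
namespace DGraph

/-- The infinite path `ccc…` obtained by repeating the cycle `es`. -/
def cycleRep (E : DGraph) (es : List E.Ed) (h : es ≠ []) : ℕ → E.Ed :=
  fun n => es.get ⟨n % es.length, Nat.mod_lt _ (List.length_pos_iff.mpr h)⟩

end DGraph
namespace DGraph

variable {E : DGraph}

lemma reaches_refl (a : E.V) : E.Reaches a a := Relation.ReflTransGen.refl

lemma Reaches.trans' {a b c : E.V} (h1 : E.Reaches a b) (h2 : E.Reaches b c) :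
    E.Reaches a c := Relation.ReflTransGen.trans h1 h2

lemma mem_walkVerts_left (u : E.V) (l : List E.Ed) : u ∈ E.walkVerts u l :=
  Set.mem_insert _ _

lemma mem_walkVerts_of_mem {u : E.V} {l : List E.Ed} {e : E.Ed} (he : e ∈ l) :
    E.r e ∈ E.walkVerts u l :=
  Set.mem_insert_of_mem _ ⟨e, he, rfl⟩

lemma isWalkFrom_cons {u : E.V} {e : E.Ed} {l : List E.Ed} :
    E.IsWalkFrom u (e :: l) ↔ E.s e = u ∧ E.IsWalkFrom (E.r e) l := by
  unfold IsWalkFrom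
  rw [List.Chain', List.isChain_cons]
  constructor
  · rintro ⟨⟨h1, h2⟩, h3⟩
    exact ⟨h3 e rfl, h2, fun f hf => (h1 f hf).symm⟩
  · rintro ⟨h1, h2, h3⟩
    refine ⟨⟨fun f hf => (h3 f hf).symm, h2⟩, fun f hf => ?_⟩
    simp only [List.head?_cons, Option.mem_def, Option.some.injEq] at hf
    subst hf; exact h1

lemma endVert_nil (u : E.V) : E.endVert u [] = u := rfl

lemma endVert_cons (u : E.V) (e : E.Ed) (l : List E.Ed) :
    E.endVert u (e :: l) = E.endVert (E.r e) l := by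
  cases l with
  | nil => rfl
  | cons f t =>
    rw [endVert, endVert, List.getLast?_cons_cons]
    cases h : (f :: t).getLast? with
    | none => simp at h
    | some y => rfl

lemma walkVerts_cons (u : E.V) (e : E.Ed) (l : List E.Ed) :
    E.walkVerts u (e :: l) = insert u (E.walkVerts (E.r e) l) := by
  ext x
  simp only [walkVerts, Set.mem_insert_iff, Set.mem_setOf_eq, List.mem_cons]
  constructor
  · rintro (rfl | ⟨f, (rfl | hf), rfl⟩)
    · exact Or.inl rfl
    · exact Or.inr (Or.inl rfl)
    · exact Or.inr (Or.inr ⟨f, ‹_›, rfl⟩)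
  · rintro (rfl | rfl | ⟨f, hf, rfl⟩)
    · exact Or.inl rfl
    · exact Or.inr ⟨e, Or.inl rfl, rfl⟩
    · exact Or.inr ⟨f, Or.inr hf, rfl⟩

lemma walkVerts_nil (u : E.V) : E.walkVerts u ([] : List E.Ed) = {u} := by
  ext x; simp [walkVerts]

lemma walk_reaches {u : E.V} {l : List E.Ed} (h : E.IsWalkFrom u l) :
    ∀ x ∈ E.walkVerts u l, E.Reaches u x ∧ E.Reaches x (E.endVert u l) := by
  induction l generalizing u with
  | nil =>
    intro x hx
    rw [walkVerts_nil] at hx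
    rcases hx with rfl
    exact ⟨reaches_refl _, reaches_refl _⟩
  | cons e t ih =>
    rw [isWalkFrom_cons] at h
    rw [walkVerts_cons, endVert_cons]
    have hadj : E.Adj u (E.r e) := ⟨e, h.1, rfl⟩
    intro x hx
    rcases hx with rfl | hx
    · exact ⟨reaches_refl x,
        Relation.ReflTransGen.head hadj (ih h.2 _ (mem_walkVerts_left _ _)).2⟩
    · exact ⟨Relation.ReflTransGen.head hadj (ih h.2 x hx).1, (ih h.2 x hx).2⟩

lemma walk_comparable {u : E.V} {l : List E.Ed} (h : E.IsWalkFrom u l) :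
    ∀ x ∈ E.walkVerts u l, ∀ y ∈ E.walkVerts u l,
      E.Reaches x y ∨ E.Reaches y x := by
  induction l generalizing u with
  | nil =>
    intro x hx y hy
    rw [walkVerts_nil] at hx hy
    rcases hx with rfl; rcases hy with rfl
    exact Or.inl (reaches_refl _)
  | cons e t ih =>
    rw [isWalkFrom_cons] at h
    rw [walkVerts_cons]
    have hadj : E.Adj u (E.r e) := ⟨e, h.1, rfl⟩
    intro x hx y hy
    rcases hx with rfl | hx <;> rcases hy with rfl | hy
    · exact Or.inl (reaches_refl _)
    · exact Or.inl (Relation.ReflTransGen.head hadj (walk_reaches h.2 y hy).1)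
    · exact Or.inr (Relation.ReflTransGen.head hadj (walk_reaches h.2 x hx).1)
    · exact ih h.2 x hx y hy

lemma infPath_reaches {f : ℕ → E.Ed} (h : E.IsInfPath f) {m n : ℕ} (hmn : m ≤ n) :
    E.Reaches (E.s (f m)) (E.s (f n)) := by
  induction n, hmn using Nat.le_induction with
  | base => exact reaches_refl _
  | succ n hmn ih =>
    exact ih.trans' (Relation.ReflTransGen.single ⟨f n, rfl, h n⟩)

lemma reaches_walk {a b : E.V} (h : E.Reaches a b) :
    ∃ l, E.IsWalkFrom a l ∧ E.endVert a l = b := by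
  induction h using Relation.ReflTransGen.head_induction_on with
  | refl => exact ⟨[], ⟨List.isChain_nil, by simp⟩, rfl⟩
  | head hadj hr ih =>
    obtain ⟨e, hse, hre⟩ := hadj
    obtain ⟨l, hw, he⟩ := ih
    refine ⟨e :: l, isWalkFrom_cons.mpr ⟨hse, by rw [hre]; exact hw⟩, ?_⟩
    rw [endVert_cons, hre]; exact he

lemma isWalkFrom_append {a : E.V} {l1 l2 : List E.Ed} (h1 : E.IsWalkFrom a l1)
    (h2 : E.IsWalkFrom (E.endVert a l1) l2) :
    E.IsWalkFrom a (l1 ++ l2) ∧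
      E.endVert a (l1 ++ l2) = E.endVert (E.endVert a l1) l2 := by
  induction l1 generalizing a with
  | nil => exact ⟨h2, rfl⟩
  | cons e t ih =>
    rw [isWalkFrom_cons] at h1
    rw [endVert_cons] at h2 ⊢
    rw [List.cons_append, endVert_cons]
    obtain ⟨hw, he⟩ := ih h1.2 h2
    exact ⟨isWalkFrom_cons.mpr ⟨h1.1, hw⟩, he⟩

lemma nodup_map_inj {l : List E.Ed} (h : (l.map E.s).Nodup) {a b : E.Ed}
    (ha : a ∈ l) (hb : b ∈ l) (hs : E.s a = E.s b) : a = b := by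
  obtain ⟨i, rfl⟩ := List.mem_iff_get.mp ha
  obtain ⟨j, rfl⟩ := List.mem_iff_get.mp hb
  have hij : (⟨i, by simp⟩ : Fin (l.map E.s).length) = ⟨j, by simp⟩ := by
    apply List.nodup_iff_injective_get.mp h
    simpa using hs
  have hval : (i : ℕ) = (j : ℕ) := by simpa using hij
  exact congrArg l.get (Fin.ext hval)

lemma sget_congr {α : Type} {l : List α} {i j : ℕ} (hi : i < l.length) (h : i = j) :
    l.get ⟨i, hi⟩ = l.get ⟨j, h ▸ hi⟩ := by subst h; rfl

lemma walk_getLast {u : E.V} {l : List E.Ed} (hne : l ≠ []) :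
    E.endVert u l = E.r (l.get ⟨l.length - 1, by
      have := List.length_pos_iff.mpr hne; omega⟩) := by
  rw [endVert, List.getLast?_eq_getElem?,
    List.getElem?_eq_getElem (by have := List.length_pos_iff.mpr hne; omega)]
  rfl

lemma walk_head {u : E.V} {l : List E.Ed} (hne : l ≠ []) (h : E.IsWalkFrom u l) :
    E.s (l.get ⟨0, List.length_pos_iff.mpr hne⟩) = u := by
  apply h.2
  rw [List.head?_eq_getElem?, List.getElem?_eq_getElem (List.length_pos_iff.mpr hne)]
  rfl

lemma walk_chain {u : E.V} {l : List E.Ed} (h : E.IsWalkFrom u l) {i : ℕ}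
    (hi : i + 1 < l.length) :
    E.r (l.get ⟨i, by omega⟩) = E.s (l.get ⟨i + 1, hi⟩) :=
  List.isChain_iff_getElem.mp h.1 i hi

lemma cycleRep_infPath {u : E.V} {es : List E.Ed} (hc : E.IsCycle u es)
    (h : es ≠ []) : E.IsInfPath (E.cycleRep es h) := by
  intro n
  have hL : 0 < es.length := List.length_pos_iff.mpr h
  have hk : n % es.length < es.length := Nat.mod_lt _ hL
  have hmod : (n + 1) % es.length = (n % es.length + 1) % es.length := by
    conv_lhs => rw [Nat.add_mod]
    conv_rhs => rw [Nat.add_mod, Nat.mod_mod]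
  rcases Nat.lt_or_ge (n % es.length + 1) es.length with hlt | hge
  · have h2 : (n + 1) % es.length = n % es.length + 1 := by
      rw [hmod, Nat.mod_eq_of_lt hlt]
    have hstep : E.r (es.get ⟨n % es.length, by omega⟩) = E.s (es.get ⟨n % es.length + 1, hlt⟩) :=
      walk_chain hc.2.1 hlt
    show E.r (E.cycleRep es h n) = E.s (E.cycleRep es h (n + 1))
    calc E.r (E.cycleRep es h n) = E.s (es.get ⟨n % es.length + 1, hlt⟩) := hstep
      _ = E.s (E.cycleRep es h (n + 1)) :=
        congrArg E.s (sget_congr hlt h2.symm)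
  · have hk1 : n % es.length + 1 = es.length := by omega
    have h2 : (n + 1) % es.length = 0 := by rw [hmod, hk1, Nat.mod_self]
    show E.r (E.cycleRep es h n) = E.s (E.cycleRep es h (n + 1))
    calc E.r (E.cycleRep es h n)
        = E.r (es.get ⟨es.length - 1, by omega⟩) :=
          congrArg E.r (sget_congr (Nat.mod_lt _ hL) (by omega))
      _ = E.endVert u es := (walk_getLast h).symm
      _ = u := hc.2.2.1
      _ = E.s (es.get ⟨0, hL⟩) := (walk_head h hc.2.1).symm
      _ = E.s (E.cycleRep es h (n + 1)) := congrArg E.s (sget_congr hL h2.symm)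

lemma cycle_walkVerts_eq_sources {u : E.V} {es : List E.Ed} (hc : E.IsCycle u es) :
    ∀ x ∈ E.walkVerts u es, ∃ (i : ℕ) (hi : i < es.length), E.s (es.get ⟨i, hi⟩) = x := by
  intro x hx
  have hne := hc.1
  have hL : 0 < es.length := List.length_pos_iff.mpr hne
  rcases hx with rfl | ⟨e, he, rfl⟩
  · exact ⟨0, hL, walk_head hne hc.2.1⟩
  · obtain ⟨⟨k, hk⟩, rfl⟩ := List.mem_iff_get.mp he
    rcases Nat.lt_or_ge (k + 1) es.length with hlt | hge
    · exact ⟨k + 1, hlt, (walk_chain hc.2.1 hlt).symm⟩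
    · refine ⟨0, hL, ?_⟩
      calc E.s (es.get ⟨0, hL⟩) = u := walk_head hne hc.2.1
        _ = E.endVert u es := hc.2.2.1.symm
        _ = E.r (es.get ⟨es.length - 1, by omega⟩) := walk_getLast hne
        _ = E.r (es.get ⟨k, hk⟩) := congrArg E.r (sget_congr (by omega) (by omega))

lemma cycleRep_verts {u : E.V} {es : List E.Ed} (hc : E.IsCycle u es)
    (h : es ≠ []) : E.infVerts (E.cycleRep es h) = E.walkVerts u es := by
  have hL : 0 < es.length := List.length_pos_iff.mpr h
  have hip := cycleRep_infPath hc h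
  ext x
  constructor
  · rintro ⟨n, rfl⟩
    show E.s (E.cycleRep es h n) ∈ E.walkVerts u es
    rcases Nat.eq_zero_or_pos (n % es.length) with h0 | hpos
    · have key : E.s (E.cycleRep es h n) = u :=
        calc E.s (E.cycleRep es h n)
            = E.s (es.get ⟨0, hL⟩) := congrArg E.s (sget_congr (Nat.mod_lt _ hL) h0)
          _ = u := walk_head h hc.2.1
      rw [key]; exact mem_walkVerts_left _ _
    · obtain ⟨m, hm⟩ : ∃ m, n % es.length = m + 1 := ⟨n % es.length - 1, by omega⟩
      have hmlt : m + 1 < es.length := hm ▸ Nat.mod_lt _ hL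
      have key : E.s (E.cycleRep es h n) = E.r (es.get ⟨m, by omega⟩) :=
        calc E.s (E.cycleRep es h n)
            = E.s (es.get ⟨m + 1, hmlt⟩) := congrArg E.s (sget_congr (Nat.mod_lt _ hL) hm)
          _ = E.r (es.get ⟨m, by omega⟩) := (walk_chain hc.2.1 hmlt).symm
      rw [key]; exact mem_walkVerts_of_mem (List.get_mem _ _)
  · intro hx
    rcases hx with heq | ⟨e, he, rfl⟩
    · subst heq
      refine ⟨0, ?_⟩
      show E.s (E.cycleRep es h 0) = _
      calc E.s (E.cycleRep es h 0)
          = E.s (es.get ⟨0, hL⟩) := congrArg E.s (sget_congr (Nat.mod_lt _ hL) (Nat.zero_mod _))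
        _ = _ := walk_head h hc.2.1
    · obtain ⟨⟨k, hk⟩, rfl⟩ := List.mem_iff_get.mp he
      refine ⟨k + 1, ?_⟩
      show E.s (E.cycleRep es h (k + 1)) = _
      exact (hip k).symm.trans
        (congrArg E.r (sget_congr (Nat.mod_lt _ hL) (Nat.mod_eq_of_lt hk)))

lemma cycle_vert_reaches {u : E.V} {es : List E.Ed} (hc : E.IsCycle u es) {x : E.V}
    (hx : x ∈ E.walkVerts u es) : E.Reaches u x ∧ E.Reaches x u := by
  have h := walk_reaches hc.2.1 x hx
  rwa [hc.2.2.1] at h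

lemma sink_reaches_eq {a b : E.V} (hs : E.IsSink a) (h : E.Reaches a b) : a = b := by
  rcases Relation.ReflTransGen.cases_head h with rfl | ⟨c, hac, -⟩
  · rfl
  · obtain ⟨e, hse, -⟩ := hac
    have hmem : e ∈ E.emits a := hse
    rw [hs] at hmem
    exact absurd hmem (Set.notMem_empty e)

lemma shorten {w : E.V} {l : List E.Ed} (hw : E.IsWalkFrom w l) (hend : E.endVert w l = w)
    {i j : ℕ} (hij : i < j) (hj : j < l.length) (hs : E.s (l.get ⟨i, by omega⟩) = E.s (l.get ⟨j, hj⟩)) :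
    ∃ l' : List E.Ed, l'.length < l.length ∧ l' ≠ [] ∧ E.IsWalkFrom w l' ∧
      E.endVert w l' = w ∧ ∀ e ∈ l', e ∈ l := by
  have hL : 0 < l.length := by omega
  have hne : l ≠ [] := List.length_pos_iff.mp hL
  refine ⟨l.take i ++ l.drop j, ?_, ?_, ⟨?_, ?_⟩, ?_, ?_⟩
  · simp only [List.length_append, List.length_take, List.length_drop]
    omega
  · intro hnil
    have := congrArg List.length hnil
    simp only [List.length_append, List.length_take, List.length_drop,
      List.length_nil] at this
    omega
  · -- chain'
    rw [List.Chain', List.isChain_append]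
    refine ⟨hw.1.prefix (List.take_prefix _ _), hw.1.suffix (List.drop_suffix _ _), ?_⟩
    intro a ha b hb
    rcases Nat.eq_zero_or_pos i with rfl | hipos
    · simp at ha
    · have hlen : (l.take i).length = i := by simp; omega
      have hga : a = l.get ⟨i - 1, by omega⟩ := by
        have : (l.take i).getLast? = some ((l.take i).get ⟨i - 1, by omega⟩) := by
          rw [List.getLast?_eq_getElem?, List.getElem?_eq_getElem (by omega)]
          simp [hlen]
        rw [this] at ha
        have h2 : (l.take i).get ⟨i - 1, by omega⟩ = l.get ⟨i - 1, by omega⟩ := by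
          simp [List.getElem_take]
        simp only [Option.mem_def, Option.some.injEq] at ha
        rw [← ha, h2]
      have hgb : b = l.get ⟨j, hj⟩ := by
        have : (l.drop j).head? = some (l.get ⟨j, hj⟩) := by
          rw [List.head?_eq_getElem?, List.getElem?_drop]
          rw [List.getElem?_eq_getElem (by omega)]
          simp
        rw [this] at hb
        simp only [Option.mem_def, Option.some.injEq] at hb
        exact hb.symm
      rw [hga, hgb, ← hs]
      have : i - 1 + 1 = i := by omega
      calc E.r (l.get ⟨i - 1, by omega⟩)
          = E.s (l.get ⟨i - 1 + 1, by omega⟩) := walk_chain hw (by omega)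
        _ = E.s (l.get ⟨i, by omega⟩) := congrArg E.s (sget_congr (by omega) this)
  · -- head condition
    intro e he
    rw [List.head?_append] at he
    rcases Nat.eq_zero_or_pos i with rfl | hipos
    · simp only [List.take_zero, List.head?_nil, Option.none_or] at he
      have : (l.drop j).head? = some (l.get ⟨j, hj⟩) := by
        rw [List.head?_eq_getElem?, List.getElem?_drop, List.getElem?_eq_getElem (by omega)]
        simp
      rw [this] at he
      simp only [Option.mem_def, Option.some.injEq] at he
      subst he
      rw [← hs]
      exact walk_head hne hw
    · have hlen : (l.take i).length = i := by simp; omega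
      have h0 : (l.take i).head? = some (l.get ⟨0, hL⟩) := by
        rw [List.head?_eq_getElem?, List.getElem?_eq_getElem (by omega)]
        simp [List.getElem_take]
      rw [h0] at he
      simp only [Option.some_or, Option.mem_def, Option.some.injEq] at he
      subst he
      exact walk_head hne hw
  · -- endVert
    have hdne : l.drop j ≠ [] := by
      intro hnil
      have := congrArg List.length hnil
      simp at this; omega
    have h1 : (l.take i ++ l.drop j).getLast? = (l.drop j).getLast? :=
      List.getLast?_append_of_ne_nil _ hdne
    have h2 : l.getLast? = (l.drop j).getLast? := by
      conv_lhs => rw [← List.take_append_drop j l]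
      exact List.getLast?_append_of_ne_nil _ hdne
    show (l.take i ++ l.drop j).getLast?.elim w E.r = w
    rw [h1, ← h2]
    exact hend
  · intro e he
    rcases List.mem_append.mp he with h1 | h1
    · exact ((List.take_prefix _ _).sublist).subset h1
    · exact ((List.drop_suffix _ _).sublist).subset h1

lemma cycle_extract {w : E.V} :
    ∀ n (l : List E.Ed), l.length ≤ n → l ≠ [] → E.IsWalkFrom w l → E.endVert w l = w →
    ∃ es', E.IsCycle w es' ∧ ∀ e ∈ es', e ∈ l := by
  intro n
  induction n with
  | zero =>
    intro l hl hne
    exact absurd (List.length_eq_zero_iff.mp (Nat.le_zero.mp hl)) hne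
  | succ n ih =>
    intro l hl hne hw hend
    by_cases hnd : (l.map E.s).Nodup
    · exact ⟨l, ⟨hne, hw, hend, hnd⟩, fun e he => he⟩
    · rw [List.nodup_iff_injective_get] at hnd
      simp only [Function.Injective] at hnd
      push_neg at hnd
      obtain ⟨a, b, hab, hne'⟩ := hnd
      have hga : (l.map E.s).get a = E.s (l.get ⟨a, by simpa using a.2⟩) := by simp
      have hgb : (l.map E.s).get b = E.s (l.get ⟨b, by simpa using b.2⟩) := by simp
      have key : ∀ (i j : ℕ) (hij : i < j) (hj : j < l.length),
          E.s (l.get ⟨i, by omega⟩) = E.s (l.get ⟨j, hj⟩) →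
          ∃ es', E.IsCycle w es' ∧ ∀ e ∈ es', e ∈ l := by
        intro i j hij hj hs
        obtain ⟨l', hlt, hne2, hw2, hend2, hsub⟩ := shorten hw hend hij hj hs
        obtain ⟨es', hcy, hsub2⟩ := ih l' (by omega) hne2 hw2 hend2
        exact ⟨es', hcy, fun e he => hsub e (hsub2 e he)⟩
      have hab' : (a : ℕ) ≠ (b : ℕ) := fun h => hne' (Fin.ext h)
      rcases hab'.lt_or_gt with hlt | hlt
      · exact key a b hlt (by simpa using b.2) (by rw [← hga, ← hgb]; exact hab)
      · exact key b a hlt (by simpa using a.2) (by rw [← hga, ← hgb]; exact hab.symm)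

lemma no_exit_absurd {u : E.V} {es : List E.Ed} (hc : E.IsExtremeCycle u es)
    {u2 : E.V} {es2 : List E.Ed} (h1 : E.IsCycle u2 es2) (h2 : ¬E.HasExit u2 es2)
    {x : E.V} (hx : x ∈ E.walkVerts u2 es2) (hr : E.Reaches x u) : False := by
  have hedge : ∀ e : E.Ed, E.s e ∈ E.walkVerts u2 es2 → e ∈ es2 := by
    intro e he
    by_contra hne
    exact h2 ⟨E.s e, he, e, rfl, hne⟩
  have hclosed : ∀ a b : E.V, E.Reaches a b → a ∈ E.walkVerts u2 es2 →
      b ∈ E.walkVerts u2 es2 := by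
    intro a b hab
    induction hab with
    | refl => exact id
    | tail hab hadj ih =>
      intro ha
      obtain ⟨e, hse, hre⟩ := hadj
      rw [← hre]
      exact mem_walkVerts_of_mem (hedge e (by rw [hse]; exact ih ha))
  have hu : u ∈ E.walkVerts u2 es2 := hclosed x u hr hx
  obtain ⟨x0, hx0, e, hse, hnes⟩ := hc.2.1
  have hux0 : E.Reaches u x0 := (cycle_vert_reaches hc.1 hx0).1
  have hx0V2 : x0 ∈ E.walkVerts u2 es2 := hclosed u x0 hux0 hu
  obtain ⟨i, hi, hsi⟩ := cycle_walkVerts_eq_sources hc.1 x0 hx0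
  have hei : es.get ⟨i, hi⟩ ∈ es2 := hedge _ (by rw [hsi]; exact hx0V2)
  have heo : e ∈ es2 := hedge e (by rw [hse]; exact hx0V2)
  have hnee : e ≠ es.get ⟨i, hi⟩ := fun h => hnes (h ▸ List.get_mem _ _)
  exact hnee (nodup_map_inj h1.2.2.2 heo hei (by rw [hse, hsi]))

lemma extreme_cycle_through {u : E.V} {es : List E.Ed} (hc : E.IsExtremeCycle u es)
    {w : E.V} (hw : w ∈ E.tree (E.walkVerts u es)) :
    ∃ es', E.IsExtremeCycle w es' ∧
      E.root (E.walkVerts w es') = E.root (E.walkVerts u es) := by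
  obtain ⟨y, hy, hyw⟩ := hw
  have huw : E.Reaches u w := (cycle_vert_reaches hc.1 hy).1.trans' hyw
  have hwu : E.Reaches w u := by
    obtain ⟨y', hy', h'⟩ := hc.2.2 ⟨y, hy, hyw⟩
    exact h'.trans' (cycle_vert_reaches hc.1 hy').2
  by_cases hwequ : w = u
  · subst hwequ
    exact ⟨es, hc, rfl⟩
  · obtain ⟨l1, hl1w, hl1e⟩ := reaches_walk hwu
    obtain ⟨l2, hl2w, hl2e⟩ := reaches_walk huw
    have hl1ne : l1 ≠ [] := by
      rintro rfl
      exact hwequ hl1e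
    obtain ⟨hlw, hle⟩ := isWalkFrom_append hl1w (by rw [hl1e]; exact hl2w)
    have hlend : E.endVert w (l1 ++ l2) = w := by rw [hle, hl1e, hl2e]
    have hlne : l1 ++ l2 ≠ [] := fun h => hl1ne (List.append_eq_nil_iff.mp h).1
    obtain ⟨es', hcy', hsub⟩ := cycle_extract (l1 ++ l2).length (l1 ++ l2) le_rfl hlne hlw hlend
    -- every vertex of the new cycle is reachable from u and reaches u
    have hverts : ∀ x ∈ E.walkVerts w es', E.Reaches u x ∧ E.Reaches x u := by
      intro x hx
      rcases hx with rfl | ⟨e, he, rfl⟩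
      · exact ⟨huw, hwu⟩
      · rcases List.mem_append.mp (hsub e he) with h1 | h1
        · have := walk_reaches hl1w (E.r e) (mem_walkVerts_of_mem h1)
          rw [hl1e] at this
          exact ⟨huw.trans' this.1, this.2⟩
        · have := walk_reaches hl2w (E.r e) (mem_walkVerts_of_mem h1)
          rw [hl2e] at this
          exact ⟨this.1, this.2.trans' hwu⟩
    have hexit' : E.HasExit w es' := by
      by_contra hnex
      exact no_exit_absurd hc hcy' hnex (mem_walkVerts_left w es') hwu
    have hext' : E.tree (E.walkVerts w es') ⊆ E.root (E.walkVerts w es') := by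
      rintro x ⟨z, hz, hzx⟩
      have hux : E.Reaches u x := (hverts z hz).1.trans' hzx
      obtain ⟨y2, hy2, hxy2⟩ := hc.2.2 ⟨u, mem_walkVerts_left u es, hux⟩
      exact ⟨w, mem_walkVerts_left w es',
        hxy2.trans' ((cycle_vert_reaches hc.1 hy2).2.trans' huw)⟩
    refine ⟨es', ⟨hcy', hexit', hext'⟩, ?_⟩
    ext x
    constructor
    · rintro ⟨z, hz, hxz⟩
      exact ⟨u, mem_walkVerts_left u es, hxz.trans' (hverts z hz).2⟩
    · rintro ⟨y2, hy2, hxy2⟩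
      exact ⟨w, mem_walkVerts_left w es',
        hxy2.trans' ((cycle_vert_reaches hc.1 hy2).2.trans' huw)⟩

lemma mem_satClosure_iff {W : Set E.V} {x : E.V} :
    x ∈ E.satClosure W ↔
      ∀ H : Set E.V, E.Hereditary H → E.Saturated H → W ⊆ H → x ∈ H := by
  simp [satClosure, Set.mem_sInter, and_imp, Set.mem_setOf_eq]

lemma subset_satClosure (W : Set E.V) : W ⊆ E.satClosure W :=
  fun _ hx => mem_satClosure_iff.mpr fun _ _ _ hWH => hWH hx

lemma satClosure_min {W H : Set E.V} (h1 : E.Hereditary H) (h2 : E.Saturated H)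
    (h3 : W ⊆ H) : E.satClosure W ⊆ H :=
  fun _ hx => mem_satClosure_iff.mp hx H h1 h2 h3

lemma satClosure_hereditary (W : Set E.V) : E.Hereditary (E.satClosure W) :=
  fun a ha b hab => mem_satClosure_iff.mpr fun H h1 h2 h3 =>
    h1 a (mem_satClosure_iff.mp ha H h1 h2 h3) b hab

lemma satClosure_saturated (W : Set E.V) : E.Saturated (E.satClosure W) :=
  fun vtx hreg hall => mem_satClosure_iff.mpr fun H h1 h2 h3 =>
    h2 vtx hreg fun e he => mem_satClosure_iff.mp (hall e he) H h1 h2 h3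

end DGraph


/-- Lemma, extreme cycle case: if `v` lies on an extreme cycle `c`
with cluster `C`, then `ccc… ∈ E^{≤∞}` contains `v`; any `p ∈ E^{≤∞}` with `v ∈ p⁰`
satisfies `p ∼ ccc…`; `C = T(c⁰) = T(C)`; and `satClosure C = satClosure {u}` for
any `u ∈ T(c⁰)`. -/
theorem cluster_of_extreme_cycle (E : DGraph) (u : E.V) (es : List E.Ed)
    (hc : E.IsExtremeCycle u es) (v : E.V) (hv : v ∈ E.walkVerts u es) :
    (E.gmem (DGraph.GPath.inf (E.cycleRep es hc.1.1)) ∧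
      v ∈ E.infVerts (E.cycleRep es hc.1.1)) ∧
    (∀ p : DGraph.GPath E, E.gmem p → v ∈ E.gverts p →
      E.pequiv p (DGraph.GPath.inf (E.cycleRep es hc.1.1))) ∧
    (E.cluster v = E.tree (E.walkVerts u es) ∧ E.tree (E.cluster v) = E.cluster v) ∧
    (∀ w ∈ E.tree (E.walkVerts u es),
      E.satClosure (E.cluster v) = E.satClosure {w}) := by
  have hcyc := hc.1
  have hinf : E.gmem (DGraph.GPath.inf (E.cycleRep es hc.1.1)) :=
    DGraph.cycleRep_infPath hcyc hc.1.1
  have hV : E.infVerts (E.cycleRep es hc.1.1) = E.walkVerts u es :=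
    DGraph.cycleRep_verts hcyc hc.1.1
  have part2 : ∀ p : DGraph.GPath E, E.gmem p → v ∈ E.gverts p →
      E.pequiv p (DGraph.GPath.inf (E.cycleRep es hc.1.1)) := by
    intro p hp hvp
    show E.root (E.gverts p) = E.root (E.gverts (DGraph.GPath.inf (E.cycleRep es hc.1.1)))
    have hgv : E.gverts (DGraph.GPath.inf (E.cycleRep es hc.1.1)) = E.walkVerts u es := hV
    rw [hgv]
    ext x
    constructor
    · rintro ⟨z, hz, hxz⟩
      have hcomp : E.Reaches z v ∨ E.Reaches v z := by
        cases p with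
        | fin a l => exact DGraph.walk_comparable hp.1 z hz v hvp
        | inf g =>
          obtain ⟨m, rfl⟩ := hz
          obtain ⟨n, heq⟩ := hvp
          have heq' : E.s (g n) = v := heq
          rcases le_total m n with hmn | hmn
          · exact Or.inl (heq' ▸ DGraph.infPath_reaches hp hmn)
          · exact Or.inr (heq' ▸ DGraph.infPath_reaches hp hmn)
      rcases hcomp with hzv | hvz
      · exact ⟨v, hv, hxz.trans' hzv⟩
      · obtain ⟨y, hy, hzy⟩ := hc.2.2 ⟨v, hv, hvz⟩
        exact ⟨y, hy, hxz.trans' hzy⟩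
    · rintro ⟨y, hy, hxy⟩
      exact ⟨v, hvp, hxy.trans' ((DGraph.cycle_vert_reaches hcyc hy).2.trans'
        (DGraph.cycle_vert_reaches hcyc hv).1)⟩
  have part3a : E.cluster v = E.tree (E.walkVerts u es) := by
    ext w
    constructor
    · rintro ⟨hvT, hwT, p, q, hp, hq, hvp, hwq, hpq⟩
      have hq_root : E.root (E.gverts q) = E.root (E.walkVerts u es) := by
        have h2 : E.root (E.gverts p) =
            E.root (E.gverts (DGraph.GPath.inf (E.cycleRep es hc.1.1))) := part2 p hp hvp
        have h3 : E.root (E.gverts (DGraph.GPath.inf (E.cycleRep es hc.1.1))) =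
            E.root (E.walkVerts u es) := congrArg E.root hV
        exact (hpq.symm).trans (h2.trans h3)
      have hwR : w ∈ E.root (E.walkVerts u es) :=
        hq_root ▸ (⟨w, hwq, DGraph.reaches_refl w⟩ : w ∈ E.root (E.gverts q))
      obtain ⟨y, hy, hwy⟩ := hwR
      have hwu : E.Reaches w u := hwy.trans' (DGraph.cycle_vert_reaches hcyc hy).2
      refine ⟨u, DGraph.mem_walkVerts_left u es, ?_⟩
      rcases hwT with hsink | ⟨u2, es2, hc2, hnex, hw2⟩ | ⟨u3, es3, hc3, hw3⟩ | ⟨g, hg, hwg⟩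
      · rw [← DGraph.sink_reaches_eq hsink hwu]
        exact DGraph.reaches_refl w
      · exact (DGraph.no_exit_absurd hc hc2 hnex hw2 hwu).elim
      · obtain ⟨z, hz3, huz⟩ := hc3.2.2 ⟨w, hw3, hwu⟩
        exact huz.trans' ((DGraph.cycle_vert_reaches hc3.1 hz3).2.trans'
          (DGraph.cycle_vert_reaches hc3.1 hw3).1)
      · exact absurd (⟨u, es, hcyc, hy⟩ : E.OnCycle y) (hg.2.1 y ⟨w, hwg, hwy⟩).2
    · intro hw
      obtain ⟨es', hce', hroot'⟩ := DGraph.extreme_cycle_through hc hw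
      refine ⟨Or.inr (Or.inr (Or.inl ⟨u, es, hc, hv⟩)),
        Or.inr (Or.inr (Or.inl ⟨w, es', hce', DGraph.mem_walkVerts_left w es'⟩)),
        DGraph.GPath.inf (E.cycleRep es hc.1.1),
        DGraph.GPath.inf (E.cycleRep es' hce'.1.1),
        hinf, DGraph.cycleRep_infPath hce'.1 hce'.1.1, ?_, ?_, ?_⟩
      · show v ∈ E.infVerts (E.cycleRep es hc.1.1)
        rw [hV]; exact hv
      · show w ∈ E.infVerts (E.cycleRep es' hce'.1.1)
        rw [DGraph.cycleRep_verts hce'.1 hce'.1.1]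
        exact DGraph.mem_walkVerts_left w es'
      · show E.root (E.infVerts (E.cycleRep es hc.1.1)) =
          E.root (E.infVerts (E.cycleRep es' hce'.1.1))
        rw [hV, DGraph.cycleRep_verts hce'.1 hce'.1.1]
        exact hroot'.symm
  refine ⟨⟨hinf, by rw [hV]; exact hv⟩, part2, ⟨part3a, ?_⟩, ?_⟩
  · rw [part3a]
    ext x
    constructor
    · rintro ⟨z, ⟨y, hy, hyz⟩, hzx⟩
      exact ⟨y, hy, hyz.trans' hzx⟩
    · intro hx
      exact ⟨x, hx, DGraph.reaches_refl x⟩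
  · intro w hw
    rw [part3a]
    apply Set.Subset.antisymm
    · apply DGraph.satClosure_min (DGraph.satClosure_hereditary _)
        (DGraph.satClosure_saturated _)
      intro x hx
      have hwu : E.Reaches w u := by
        obtain ⟨y, hy, h'⟩ := hc.2.2 hw
        exact h'.trans' (DGraph.cycle_vert_reaches hcyc hy).2
      obtain ⟨y', hy', h''⟩ := hx
      have hux : E.Reaches u x := (DGraph.cycle_vert_reaches hcyc hy').1.trans' h''
      exact DGraph.satClosure_hereditary {w} w (DGraph.subset_satClosure _ rfl) x
        (hwu.trans' hux)
    · apply DGraph.satClosure_min (DGraph.satClosure_hereditary _)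
        (DGraph.satClosure_saturated _)
      intro x hx
      rw [Set.mem_singleton_iff] at hx
      subst hx
      exact DGraph.subset_satClosure _ hw
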